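/- In Capped Round Robin on a single category with two agents, if agent 1 plays truthfully according to valuation v and agent 2 plays according to any additive valuation v', then agent 2's resulting bundle is worth (under v, subject to agent 2's capacity) at most what agent 2's bundle is worth when she also plays according to v. That is, the truthful strategy is optimal against a truthful opponent in CRR with identical values. -/

import Mathlib

/-- The best unallocated item for a picker with valuation `w`: an item of `L` of
maximum value (ties broken by the linear order on items). -/
noncomputable def bestItem {α : Type*} [DecidableEq α] [LinearOrder α] [Inhabited α]
    (w : α → ℕ) (L : Finset α) : α :=
  if h : (L.filter (fun g => ∀ g' ∈ L, w g' ≤ w g)).Nonempty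
  then (L.filter (fun g => ∀ g' ∈ L, w g' ≤ w g)).min' h
  else default

/-- Capped Round Robin: in turn `t`, agent `σ t` picks her best remaining item unless
she has reached her capacity, in which case she is skipped; the process runs until the
pool `L` is exhausted (the `fuel` parameter only ensures termination and is taken large
enough that it never runs out). -/
noncomputable def crr {α : Type*} [DecidableEq α] [LinearOrder α] [Inhabited α] {n : ℕ}
    (k : Fin n → ℕ) (v : Fin n → α → ℕ) (σ : ℕ → Fin n) :
    ℕ → ℕ → Finset α → (Fin n → Finset α) → Fin n → Finset α
  | 0, _, _, X => X
  | fuel + 1, t, L, X =>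
    if L.Nonempty then
      if (X (σ t)).card < k (σ t) then
        crr k v σ fuel (t + 1) (L.erase (bestItem (v (σ t)) L))
          (Function.update X (σ t) (insert (bestItem (v (σ t)) L) (X (σ t))))
      else crr k v σ fuel (t + 1) L X
    else X

/-- Capped Round Robin for two agents on a single category: agent `l` picks first,
then the agents alternate; agent `i` picks using her valuation `v i`, subject to her
capacity `k i`. -/
noncomputable def crr2 {α : Type*} [DecidableEq α] [LinearOrder α] [Inhabited α]
    (k : Fin 2 → ℕ) (v : Fin 2 → α → ℕ) (l : Fin 2) (M : Finset α) :
    Fin 2 → Finset α :=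
  crr k v (fun t => if t % 2 = 0 then l else l + 1) (2 * (M.card + 1)) 0 M (fun _ => ∅)

/-- Feasible value of a bundle `T` under value function `v` and capacity `c`:
the maximum value of a subset of `T` of size at most `c`. -/
noncomputable def feasVal {α : Type*} [DecidableEq α] (v : α → ℕ) (c : ℕ)
    (T : Finset α) : ℕ :=
  ((T.powerset.filter (fun S => S.card ≤ c)).image (fun S => S.sum v)).sup id


section Aux
variable {α : Type*} [DecidableEq α] [LinearOrder α] [Inhabited α]

/-- auxiliary: membership of bestItem -/
lemma bestItem_mem (w : α → ℕ) {L : Finset α} (hL : L.Nonempty) : bestItem w L ∈ L := by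
  obtain ⟨a, ha, hmax⟩ := Finset.exists_max_image L w hL
  have hne : (L.filter (fun g => ∀ g' ∈ L, w g' ≤ w g)).Nonempty :=
    ⟨a, Finset.mem_filter.2 ⟨ha, hmax⟩⟩
  rw [bestItem, dif_pos hne]
  exact Finset.mem_of_mem_filter _ (Finset.min'_mem _ hne)

lemma bestItem_le (w : α → ℕ) {L : Finset α} (hL : L.Nonempty) {g : α} (hg : g ∈ L) :
    w g ≤ w (bestItem w L) := by
  obtain ⟨a, ha, hmax⟩ := Finset.exists_max_image L w hL
  have hne : (L.filter (fun g => ∀ g' ∈ L, w g' ≤ w g)).Nonempty :=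
    ⟨a, Finset.mem_filter.2 ⟨ha, hmax⟩⟩
  rw [bestItem, dif_pos hne]
  have := Finset.min'_mem _ hne
  exact (Finset.mem_filter.1 this).2 g hg

end Aux

/-- threshold count -/
def cnt (θ : ℕ) (s : Multiset ℕ) : ℕ := (s.filter (fun x => θ ≤ x)).card

/-- sorted-descending domination via threshold counts -/
def Dom (s t : Multiset ℕ) : Prop :=
  Multiset.card s = Multiset.card t ∧ ∀ θ : ℕ, cnt θ s ≤ cnt θ t

lemma cnt_erase (θ : ℕ) {s : Multiset ℕ} {b : ℕ} (hb : b ∈ s) :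
    cnt θ s = cnt θ (s.erase b) + (if θ ≤ b then 1 else 0) := by
  conv_lhs => rw [← Multiset.cons_erase hb]
  unfold cnt
  rw [Multiset.filter_cons]
  split <;> simp [add_comm]

lemma dom_erase {s t : Multiset ℕ} {b a : ℕ} (hd : Dom s t) (hb : b ∈ s) (ha : a ∈ t)
    (hstrict : ∀ θ, b < θ → θ ≤ a → cnt θ s < cnt θ t) :
    Dom (s.erase b) (t.erase a) := by
  obtain ⟨hc, hcnt⟩ := hd
  constructor
  · rw [← Multiset.card_erase_add_one hb, ← Multiset.card_erase_add_one ha] at hc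
    omega
  · intro θ
    have h1 := cnt_erase θ hb
    have h2 := cnt_erase θ ha
    have h3 := hcnt θ
    by_cases hθb : θ ≤ b
    · by_cases hθa : θ ≤ a
      · simp [hθb, hθa] at h1 h2; omega
      · simp [hθb, hθa] at h1 h2; omega
    · by_cases hθa : θ ≤ a
      · have := hstrict θ (by omega) hθa
        simp [hθb, hθa] at h1 h2; omega
      · simp [hθb, hθa] at h1 h2; omega

/-- from domination of value multisets, an injection increasing values -/
lemma dom_exists_inj {α : Type*} [DecidableEq α] (v : α → ℕ) :
    ∀ (A B : Finset α), Dom (A.val.map v) (B.val.map v) →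
    ∃ φ : α → α, Set.InjOn φ A ∧ ∀ x ∈ A, φ x ∈ B ∧ v x ≤ v (φ x) := by
  intro A
  induction A using Finset.strongInduction with
  | _ A ih =>
    intro B hd
    rcases A.eq_empty_or_nonempty with rfl | hA
    · exact ⟨id, by simp, by simp⟩
    obtain ⟨x, hx, hxmax⟩ := Finset.exists_max_image A v hA
    have hBne : B.Nonempty := by
      rw [← Finset.card_pos]
      have := hd.1
      simp only [Multiset.card_map] at this
      have : B.card = A.card := this.symm
      rw [this]; exact Finset.card_pos.2 hA
    obtain ⟨y, hy, hymax⟩ := Finset.exists_max_image B v hBne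
    have hxy : v x ≤ v y := by
      have h1 : 1 ≤ cnt (v x) (A.val.map v) := by
        unfold cnt
        have hm : v x ∈ (A.val.map v).filter (fun u => v x ≤ u) :=
          Multiset.mem_filter.2 ⟨Multiset.mem_map_of_mem v hx, le_refl _⟩
        have := Multiset.card_pos_iff_exists_mem.2 ⟨_, hm⟩
        omega
      have h2 := hd.2 (v x)
      have : 1 ≤ cnt (v x) (B.val.map v) := le_trans h1 h2
      unfold cnt at this
      obtain ⟨u, hu⟩ := Multiset.card_pos_iff_exists_mem.mp this
      rw [Multiset.mem_filter, Multiset.mem_map] at hu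
      obtain ⟨⟨z, hz, rfl⟩, hu2⟩ := hu
      exact le_trans hu2 (hymax z hz)
    have hxs : v x ∈ A.val.map v := Multiset.mem_map_of_mem v hx
    have hyt : v y ∈ B.val.map v := Multiset.mem_map_of_mem v hy
    have hd' : Dom ((A.erase x).val.map v) ((B.erase y).val.map v) := by
      rw [Finset.erase_val, Finset.erase_val,
        Multiset.map_erase_of_mem v _ hx, Multiset.map_erase_of_mem v _ hy]
      refine dom_erase hd hxs hyt ?_
      intro θ hbθ hθa
      have h0 : cnt θ (A.val.map v) = 0 := by
        unfold cnt
        rw [Multiset.card_eq_zero, Multiset.filter_eq_nil]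
        intro u hu
        rw [Multiset.mem_map] at hu
        obtain ⟨z, hz, rfl⟩ := hu
        have := hxmax z hz
        omega
      have h1 : 1 ≤ cnt θ (B.val.map v) := by
        unfold cnt
        have hm : v y ∈ (B.val.map v).filter (fun u => θ ≤ u) :=
          Multiset.mem_filter.2 ⟨hyt, hθa⟩
        have := Multiset.card_pos_iff_exists_mem.2 ⟨_, hm⟩
        omega
      omega
    obtain ⟨φ0, hφinj, hφ⟩ := ih (A.erase x) (Finset.erase_ssubset hx) (B.erase y) hd'
    refine ⟨fun z => if z = x then y else φ0 z, ?_, ?_⟩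
    · intro z1 hz1 z2 hz2 heq
      simp only at heq
      by_cases e1 : z1 = x <;> by_cases e2 : z2 = x
      · rw [e1, e2]
      · exfalso
        rw [if_pos e1, if_neg e2] at heq
        have hz2' : z2 ∈ A.erase x := Finset.mem_erase.2 ⟨e2, hz2⟩
        have := (hφ z2 hz2').1
        rw [← heq] at this
        exact (Finset.mem_erase.1 this).1 rfl
      · exfalso
        rw [if_neg e1, if_pos e2] at heq
        have hz1' : z1 ∈ A.erase x := Finset.mem_erase.2 ⟨e1, hz1⟩
        have := (hφ z1 hz1').1
        rw [heq] at this
        exact (Finset.mem_erase.1 this).1 rfl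
      · rw [if_neg e1, if_neg e2] at heq
        exact hφinj (Finset.mem_coe.2 (Finset.mem_erase.2 ⟨e1, hz1⟩))
          (Finset.mem_coe.2 (Finset.mem_erase.2 ⟨e2, hz2⟩)) heq
    · intro z hz
      by_cases e : z = x
      · subst e; simp only [if_pos rfl]; exact ⟨hy, hxy⟩
      · simp only [if_neg e]
        have hz' : z ∈ A.erase x := Finset.mem_erase.2 ⟨e, hz⟩
        exact ⟨Finset.mem_of_mem_erase (hφ z hz').1, (hφ z hz').2⟩

def sched (l : Fin 2) : ℕ → Fin 2 := fun t => if t % 2 = 0 then l else l + 1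

lemma sched_succ (l : Fin 2) (t : ℕ) : sched l (t + 1) = sched l t + 1 := by
  unfold sched
  rcases Nat.mod_two_eq_zero_or_one t with h | h
  · have h1 : (t + 1) % 2 = 1 := by omega
    simp [h, h1]
  · have h1 : (t + 1) % 2 = 0 := by omega
    have : l + 1 + 1 = l := by
      rw [add_assoc, show (1 + 1 : Fin 2) = 0 from rfl, add_zero]
    simp [h, h1, this]

lemma fin2_cases (i : Fin 2) : i = 0 ∨ i = 1 := by omega

lemma feasVal_mono {α : Type*} [DecidableEq α] (v : α → ℕ) (c : ℕ) (A B : Finset α)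
    (h : ∃ φ : α → α, Set.InjOn φ A ∧ ∀ x ∈ A, φ x ∈ B ∧ v x ≤ v (φ x)) :
    feasVal v c A ≤ feasVal v c B := by
  obtain ⟨φ, hinj, hφ⟩ := h
  unfold feasVal
  apply Finset.sup_le
  intro u hu
  rw [Finset.mem_image] at hu
  obtain ⟨S, hS, rfl⟩ := hu
  rw [Finset.mem_filter, Finset.mem_powerset] at hS
  obtain ⟨hSA, hSc⟩ := hS
  have hmem : (S.image φ).sum v ∈
      ((B.powerset.filter (fun S => S.card ≤ c)).image (fun S => S.sum v)) := by
    refine Finset.mem_image.2 ⟨S.image φ, Finset.mem_filter.2 ⟨Finset.mem_powerset.2 ?_, ?_⟩, rfl⟩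
    · exact Finset.image_subset_iff.2 fun x hx => (hφ x (hSA hx)).1
    · exact le_trans (Finset.card_image_le) hSc
  have h1 : S.sum v ≤ (S.image φ).sum v := by
    rw [Finset.sum_image (fun x hx y hy => hinj (hSA hx) (hSA hy))]
    exact Finset.sum_le_sum (fun x hx => (hφ x (hSA hx)).2)
  exact le_trans h1 (Finset.le_sup (f := id) hmem)

lemma crr_main {α : Type*} [DecidableEq α] [LinearOrder α] [Inhabited α]
    (k : Fin 2 → ℕ) (v v' : α → ℕ) (l : Fin 2) :
    ∀ (fuel t : ℕ) (LA LB : Finset α) (XA XB : Fin 2 → Finset α),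
    (∀ i, Disjoint (XA i) LA) → (∀ i, Disjoint (XB i) LB) →
    LA.card = LB.card → (∀ i, (XA i).card = (XB i).card) →
    (∀ x ∈ XA 1, ∀ y ∈ LA, v y ≤ v x) →
    Dom ((XB 1).val.map v + LB.val.map v) ((XA 1).val.map v + LA.val.map v) →
    (XA 0).card + (XA 1).card + LA.card ≤ k 0 + k 1 →
    (2 * LA.card < fuel ∨ (2 * LA.card ≤ fuel ∧ (XA (sched l t)).card < k (sched l t))) →
    Dom ((crr k ![v,v'] (sched l) fuel t LB XB 1).val.map v)
        ((crr k ![v,v] (sched l) fuel t LA XA 1).val.map v) := by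
  intro fuel
  induction fuel with
  | zero =>
    intro t LA LB XA XB hdA hdB hcL hcX hmax hdom hslack hfuel
    have hLA : LA.card = 0 := by omega
    have hLB : LB.card = 0 := by omega
    rw [Finset.card_eq_zero] at hLA hLB
    subst hLA hLB
    simpa [crr] using hdom
  | succ fuel ih =>
    intro t LA LB XA XB hdA hdB hcL hcX hmax hdom hslack hfuel
    by_cases hLA : LA.Nonempty
    · have hLB : LB.Nonempty := by
        rw [← Finset.card_pos, ← hcL, Finset.card_pos]; exact hLA
      have hLA1 : 1 ≤ LA.card := Finset.card_pos.2 hLA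
      simp only [crr]
      rw [if_pos hLA, if_pos hLB]
      by_cases hcap : (XA (sched l t)).card < k (sched l t)
      · have hcapB : (XB (sched l t)).card < k (sched l t) := by rw [← hcX]; exact hcap
        rw [if_pos hcap, if_pos hcapB]
        rcases fin2_cases (sched l t) with hσ | hσ <;> rw [hσ]
        · -- agent 0 picks, both use v
          simp only [Matrix.cons_val_zero]
          have hbA : bestItem v LA ∈ LA := bestItem_mem v hLA
          have hbB : bestItem v LB ∈ LB := bestItem_mem v hLB
          have hbAn : bestItem v LA ∉ XA 0 := fun h => (Finset.disjoint_left.1 (hdA 0)) h hbA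
          have hbBn : bestItem v LB ∉ XB 0 := fun h => (Finset.disjoint_left.1 (hdB 0)) h hbB
          apply ih (t+1)
          · intro i
            rcases fin2_cases i with hi | hi <;> subst hi
            · rw [Function.update_self]
              rw [Finset.disjoint_left]
              intro x hx hx'
              rcases Finset.mem_insert.1 hx with rfl | hx2
              · exact (Finset.notMem_erase _ _) hx'
              · exact (Finset.disjoint_left.1 (hdA 0)) hx2 (Finset.mem_of_mem_erase hx')
            · rw [Function.update_of_ne (by decide)]
              exact (hdA 1).mono_right (Finset.erase_subset _ _)
          · intro i
            rcases fin2_cases i with hi | hi <;> subst hi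
            · rw [Function.update_self]
              rw [Finset.disjoint_left]
              intro x hx hx'
              rcases Finset.mem_insert.1 hx with rfl | hx2
              · exact (Finset.notMem_erase _ _) hx'
              · exact (Finset.disjoint_left.1 (hdB 0)) hx2 (Finset.mem_of_mem_erase hx')
            · rw [Function.update_of_ne (by decide)]
              exact (hdB 1).mono_right (Finset.erase_subset _ _)
          · rw [Finset.card_erase_of_mem hbA, Finset.card_erase_of_mem hbB, hcL]
          · intro i
            rcases fin2_cases i with hi | hi <;> subst hi
            · rw [Function.update_self, Function.update_self,
                Finset.card_insert_of_notMem hbAn, Finset.card_insert_of_notMem hbBn, hcX 0]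
            · rw [Function.update_of_ne (by decide), Function.update_of_ne (by decide)]
              exact hcX 1
          · rw [Function.update_of_ne (by decide)]
            intro x hx y hy
            exact hmax x hx y (Finset.mem_of_mem_erase hy)
          · -- Dom preservation via dom_erase
            rw [Function.update_of_ne (by decide), Function.update_of_ne (by decide)]
            rw [Finset.erase_val, Finset.erase_val,
              Multiset.map_erase_of_mem v _ hbA, Multiset.map_erase_of_mem v _ hbB,
              ← Multiset.erase_add_right_pos _ (Multiset.mem_map_of_mem v hbB),
              ← Multiset.erase_add_right_pos _ (Multiset.mem_map_of_mem v hbA)]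
            apply dom_erase hdom
            · exact Multiset.mem_add.2 (Or.inr (Multiset.mem_map_of_mem v hbB))
            · exact Multiset.mem_add.2 (Or.inr (Multiset.mem_map_of_mem v hbA))
            · intro θ hθb hθa
              unfold cnt
              rw [Multiset.filter_add, Multiset.filter_add, Multiset.card_add, Multiset.card_add]
              have e1 : (Multiset.filter (fun x => θ ≤ x) (Multiset.map v LB.val)).card = 0 := by
                rw [Multiset.card_eq_zero, Multiset.filter_eq_nil]
                intro u hu
                rw [Multiset.mem_map] at hu
                obtain ⟨z, hz, rfl⟩ := hu
                have := bestItem_le v hLB hz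
                omega
              have e2 : (Multiset.filter (fun x => θ ≤ x) (Multiset.map v ((XB 1)).val)).card
                  ≤ (XB 1).card := by
                calc _ ≤ (Multiset.map v ((XB 1)).val).card := Multiset.card_le_card (Multiset.filter_le _ _)
                _ = (XB 1).card := by rw [Multiset.card_map]; rfl
              have e3 : (Multiset.filter (fun x => θ ≤ x) (Multiset.map v ((XA 1)).val)).card
                  = (XA 1).card := by
                rw [Multiset.filter_eq_self.2, Multiset.card_map]
                · rfl
                · intro u hu
                  rw [Multiset.mem_map] at hu
                  obtain ⟨z, hz, rfl⟩ := hu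
                  exact le_trans hθa (hmax z hz _ hbA)
              have e4 : 1 ≤ (Multiset.filter (fun x => θ ≤ x) (Multiset.map v LA.val)).card := by
                have hm : v (bestItem v LA) ∈
                    Multiset.filter (fun x => θ ≤ x) (Multiset.map v LA.val) :=
                  Multiset.mem_filter.2 ⟨Multiset.mem_map_of_mem v hbA, hθa⟩
                have := Multiset.card_pos_iff_exists_mem.2 ⟨_, hm⟩
                omega
              have e5 := hcX 1
              omega
          · rw [Function.update_self, Function.update_of_ne (by decide),
              Finset.card_insert_of_notMem hbAn, Finset.card_erase_of_mem hbA]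
            omega
          · left
            rw [Finset.card_erase_of_mem hbA]
            omega
        · -- agent 1 picks; A uses v, B uses v'
          simp only [Matrix.cons_val_one, Matrix.head_cons, Matrix.cons_val_zero]
          have hbA : bestItem v LA ∈ LA := bestItem_mem v hLA
          have hbB : bestItem v' LB ∈ LB := bestItem_mem v' hLB
          have hbAn : bestItem v LA ∉ XA 1 := fun h => (Finset.disjoint_left.1 (hdA 1)) h hbA
          have hbBn : bestItem v' LB ∉ XB 1 := fun h => (Finset.disjoint_left.1 (hdB 1)) h hbB
          apply ih (t+1)
          · intro i
            rcases fin2_cases i with hi | hi <;> subst hi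
            · rw [Function.update_of_ne (by decide)]
              exact (hdA 0).mono_right (Finset.erase_subset _ _)
            · rw [Function.update_self]
              rw [Finset.disjoint_left]
              intro x hx hx'
              rcases Finset.mem_insert.1 hx with rfl | hx2
              · exact (Finset.notMem_erase _ _) hx'
              · exact (Finset.disjoint_left.1 (hdA 1)) hx2 (Finset.mem_of_mem_erase hx')
          · intro i
            rcases fin2_cases i with hi | hi <;> subst hi
            · rw [Function.update_of_ne (by decide)]
              exact (hdB 0).mono_right (Finset.erase_subset _ _)
            · rw [Function.update_self]
              rw [Finset.disjoint_left]
              intro x hx hx'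
              rcases Finset.mem_insert.1 hx with rfl | hx2
              · exact (Finset.notMem_erase _ _) hx'
              · exact (Finset.disjoint_left.1 (hdB 1)) hx2 (Finset.mem_of_mem_erase hx')
          · rw [Finset.card_erase_of_mem hbA, Finset.card_erase_of_mem hbB, hcL]
          · intro i
            rcases fin2_cases i with hi | hi <;> subst hi
            · rw [Function.update_of_ne (by decide), Function.update_of_ne (by decide)]
              exact hcX 0
            · rw [Function.update_self, Function.update_self,
                Finset.card_insert_of_notMem hbAn, Finset.card_insert_of_notMem hbBn, hcX 1]
          · rw [Function.update_self]
            intro x hx y hy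
            rcases Finset.mem_insert.1 hx with rfl | hx2
            · exact bestItem_le v hLA (Finset.mem_of_mem_erase hy)
            · exact hmax x hx2 y (Finset.mem_of_mem_erase hy)
          · -- Dom: multisets unchanged
            rw [Function.update_self, Function.update_self]
            have eB : Multiset.map v (insert (bestItem v' LB) (XB 1)).val
                + Multiset.map v ((LB.erase (bestItem v' LB))).val
                = Multiset.map v (XB 1).val + Multiset.map v LB.val := by
              rw [Finset.insert_val_of_notMem hbBn, Multiset.map_cons, Finset.erase_val,
                Multiset.map_erase_of_mem v _ hbB, Multiset.cons_add,
                ← Multiset.singleton_add, add_left_comm,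
                Multiset.singleton_add, Multiset.cons_erase (Multiset.mem_map_of_mem v hbB)]
            have eA : Multiset.map v (insert (bestItem v LA) (XA 1)).val
                + Multiset.map v ((LA.erase (bestItem v LA))).val
                = Multiset.map v (XA 1).val + Multiset.map v LA.val := by
              rw [Finset.insert_val_of_notMem hbAn, Multiset.map_cons, Finset.erase_val,
                Multiset.map_erase_of_mem v _ hbA, Multiset.cons_add,
                ← Multiset.singleton_add, add_left_comm,
                Multiset.singleton_add, Multiset.cons_erase (Multiset.mem_map_of_mem v hbA)]
            rw [eA, eB]
            exact hdom
          · rw [Function.update_of_ne (by decide), Function.update_self,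
              Finset.card_insert_of_notMem hbAn, Finset.card_erase_of_mem hbA]
            omega
          · left
            rw [Finset.card_erase_of_mem hbA]
            omega
      · -- skip turn
        have hcapB : ¬ (XB (sched l t)).card < k (sched l t) := by rw [← hcX]; exact hcap
        rw [if_neg hcap, if_neg hcapB]
        apply ih (t+1) LA LB XA XB hdA hdB hcL hcX hmax hdom hslack
        right
        rcases hfuel with hfuel | hfuel
        · constructor
          · omega
          · rw [sched_succ]
            rcases fin2_cases (sched l t) with hσ | hσ <;> rw [hσ] <;> rw [hσ] at hcap <;>
              simp only [show (0:Fin 2)+1 = 1 from rfl, show (1:Fin 2)+1 = 0 from rfl] <;> omega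
        · exact absurd hfuel.2 hcap
    · have hLB : ¬ LB.Nonempty := by
        rw [← Finset.card_pos, ← hcL, Finset.card_pos]; exact hLA
      simp only [crr]
      rw [if_neg hLA, if_neg hLB]
      rw [Finset.not_nonempty_iff_eq_empty] at hLA hLB
      subst hLA hLB
      simpa using hdom
/-- In two-agent Capped Round Robin with a common value function `v`, if agent 0 plays
truthfully (according to `v`) then, whatever the order `l`, agent 1's bundle when she
plays according to an arbitrary valuation `v'` is worth at most (under `v`, subject to
her capacity) her bundle when she also plays according to `v`: truthful play is optimal
against a truthful opponent. -/
theorem stmt9 {α : Type*} [DecidableEq α] [LinearOrder α] [Inhabited α]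
    (M : Finset α) (k : Fin 2 → ℕ) (hk : M.card ≤ k 0 + k 1)
    (v v' : α → ℕ) (l : Fin 2) :
    feasVal v (k 1) (crr2 k ![v, v'] l M 1) ≤
      feasVal v (k 1) (crr2 k ![v, v] l M 1) := by
  have hdom := crr_main k v v' l (2 * (M.card + 1)) 0 M M (fun _ => ∅) (fun _ => ∅)
    (fun i => Finset.disjoint_empty_left M) (fun i => Finset.disjoint_empty_left M)
    rfl (fun i => rfl) (by simp) ⟨rfl, fun θ => le_refl _⟩ (by simpa using hk)
    (Or.inl (by omega))
  have hmain : Dom ((crr2 k ![v, v'] l M 1).val.map v) ((crr2 k ![v, v] l M 1).val.map v) := hdom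
  exact feasVal_mono v (k 1) _ _ (dom_exists_inj v _ _ hmain)
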